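/- Theorem (characterization of proxy-discrimination-free predictors, core step). Let (Ω, 𝔉, ℙ) be a probability space, W : Ω → ℝ a random variable, h : ℝ → ℝ strictly monotone, and μ ∈ ℝ. If there exist p ≠ p' in ℝ such that the pushforward measure of ℙ under ω ↦ h(W(ω) + μ·p) equals the pushforward measure of ℙ under ω ↦ h(W(ω) + μ·p'), then μ = 0. Consequently, in the additive–linear model where the predictor under do(P = p) equals h(g(T) + μ_Ŷ·p), avoiding proxy discrimination forces μ_Ŷ = 0, i.e. the predictor is a function of X − 𝔼[X | do(P)]. -/

import Mathlib

open MeasureTheory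

/-- If the CDF of `W` is invariant under a negative shift `d`, we get a contradiction
with `μ` being a probability measure. -/
lemma shift_invariant_cdf_false
    {Ω : Type*} [MeasurableSpace Ω] (μ : Measure Ω) [IsProbabilityMeasure μ]
    (W : Ω → ℝ) (hW : Measurable W) (d : ℝ) (hd : d < 0)
    (key : ∀ s : ℝ, μ {ω | W ω ≤ s} = μ {ω | W ω ≤ s + d}) : False := by
  have hiter : ∀ (n : ℕ) (s : ℝ), μ {ω | W ω ≤ s} = μ {ω | W ω ≤ s + n * d} := by
    intro n
    induction n with
    | zero => intro s; simp
    | succ n ih =>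
        intro s
        rw [ih s, key (s + n * d)]
        congr 2
        push_cast
        ring
  -- every CDF value is zero
  have hzero : ∀ s : ℝ, μ {ω | W ω ≤ s} = 0 := by
    intro s
    set A : ℕ → Set Ω := fun n => {ω | W ω ≤ s + n * d} with hA
    have hAmeas : ∀ n, MeasurableSet (A n) := fun n => hW measurableSet_Iic
    have hAanti : Antitone A := by
      intro m n hmn ω hω
      have : s + (n : ℝ) * d ≤ s + (m : ℝ) * d := by
        have : (m : ℝ) ≤ (n : ℝ) := by exact_mod_cast hmn
        nlinarith
      exact le_trans hω this
    have hAfin : ∃ n, μ (A n) ≠ ⊤ := ⟨0, measure_ne_top μ _⟩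
    have hinter : (⋂ n, A n) = ∅ := by
      ext ω
      simp only [Set.mem_iInter, Set.mem_empty_iff_false, iff_false, not_forall]
      obtain ⟨n, hn⟩ := exists_nat_gt ((s - W ω) / (-d))
      refine ⟨n, ?_⟩
      simp only [hA, Set.mem_setOf_eq, not_le]
      have hdpos : 0 < -d := by linarith
      have := (div_lt_iff₀ hdpos).mp hn
      nlinarith
    have htend : Filter.Tendsto (fun n => μ (A n)) Filter.atTop (nhds (μ (⋂ n, A n))) :=
      tendsto_measure_iInter_atTop (fun n => (hAmeas n).nullMeasurableSet) hAanti hAfin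
    rw [hinter, measure_empty] at htend
    have hconst : ∀ n, μ (A n) = μ {ω | W ω ≤ s} := fun n => (hiter n s).symm
    have : Filter.Tendsto (fun _ : ℕ => μ {ω | W ω ≤ s}) Filter.atTop (nhds 0) := by
      simpa [hconst] using htend
    exact tendsto_nhds_unique tendsto_const_nhds this
  -- but the union of all these sets is the whole space
  have huniv : (⋃ n : ℕ, {ω | W ω ≤ (n : ℝ)}) = Set.univ := by
    ext ω
    simp only [Set.mem_iUnion, Set.mem_setOf_eq, Set.mem_univ, iff_true]
    obtain ⟨n, hn⟩ := exists_nat_gt (W ω)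
    exact ⟨n, hn.le⟩
  have h0 : μ (Set.univ : Set Ω) = 0 := by
    rw [← huniv]
    exact measure_iUnion_null fun n => hzero _
  simp [measure_univ] at h0

/-- Characterization of proxy-discrimination-free predictors, core step (Theorem 4.11,
Chapter 4). If `h` is strictly monotone and the laws of `h (W + μ·p)` and `h (W + μ·p')`
agree for some `p ≠ p'`, then `μ = 0`. -/
theorem proxy_free_predictor_forces_zero_coefficient
    {Ω : Type*} [MeasurableSpace Ω] (μ : Measure Ω) [IsProbabilityMeasure μ]
    (W : Ω → ℝ) (hW : Measurable W)
    (h : ℝ → ℝ) (hmono : StrictMono h ∨ StrictAnti h)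
    (μY : ℝ)
    (hex : ∃ p p' : ℝ, p ≠ p' ∧
      Measure.map (fun ω => h (W ω + μY * p)) μ =
        Measure.map (fun ω => h (W ω + μY * p')) μ) :
    μY = 0 := by
  obtain ⟨p, p', hne, hmap⟩ := hex
  by_contra hμ
  have hhm : Measurable h := by
    rcases hmono with hm | hm
    · exact hm.monotone.measurable
    · exact hm.antitone.measurable
  have hmeas1 : Measurable (fun ω => h (W ω + μY * p)) := hhm.comp (hW.add_const _)
  have hmeas2 : Measurable (fun ω => h (W ω + μY * p')) := hhm.comp (hW.add_const _)
  set c : ℝ := μY * p - μY * p' with hc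
  have hcne : c ≠ 0 := by
    simp only [hc]
    intro hc0
    apply hne
    have : μY * (p - p') = 0 := by ring_nf; linarith [hc0]
    rcases mul_eq_zero.mp this with h1 | h1
    · exact absurd h1 hμ
    · linarith
  -- CDF equality
  have key : ∀ s : ℝ, μ {ω | W ω ≤ s} = μ {ω | W ω ≤ s + c} := by
    intro s
    rcases hmono with hm | hm
    · have := congrArg (fun ν : Measure ℝ => ν (Set.Iic (h (s + μY * p)))) hmap
      simp only [Measure.map_apply hmeas1 measurableSet_Iic,
        Measure.map_apply hmeas2 measurableSet_Iic] at this
      have e1 : (fun ω => h (W ω + μY * p)) ⁻¹' Set.Iic (h (s + μY * p))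
          = {ω | W ω ≤ s} := by
        ext ω; simp [Set.preimage, hm.le_iff_le]
      have e2 : (fun ω => h (W ω + μY * p')) ⁻¹' Set.Iic (h (s + μY * p))
          = {ω | W ω ≤ s + c} := by
        ext ω
        simp only [Set.mem_preimage, Set.mem_Iic, Set.mem_setOf_eq, hm.le_iff_le, hc]
        constructor <;> intro <;> linarith
      rw [e1, e2] at this
      exact this
    · have := congrArg (fun ν : Measure ℝ => ν (Set.Ici (h (s + μY * p)))) hmap
      simp only [Measure.map_apply hmeas1 measurableSet_Ici,
        Measure.map_apply hmeas2 measurableSet_Ici] at this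
      have e1 : (fun ω => h (W ω + μY * p)) ⁻¹' Set.Ici (h (s + μY * p))
          = {ω | W ω ≤ s} := by
        ext ω; simp [Set.preimage, hm.le_iff_ge]
      have e2 : (fun ω => h (W ω + μY * p')) ⁻¹' Set.Ici (h (s + μY * p))
          = {ω | W ω ≤ s + c} := by
        ext ω
        simp only [Set.mem_preimage, Set.mem_Ici, Set.mem_setOf_eq, hm.le_iff_ge, hc]
        constructor <;> intro <;> linarith
      rw [e1, e2] at this
      exact this
  -- reduce to a negative shift
  rcases lt_or_gt_of_ne hcne with hneg | hpos
  · exact shift_invariant_cdf_false μ W hW c hneg key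
  · refine shift_invariant_cdf_false μ W hW (-c) (by linarith) ?_
    intro s
    have h1 := key (s - c)
    have he : (s - c) + c = s := by ring
    rw [he] at h1
    simpa [sub_eq_add_neg] using h1.symm
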